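/- arXiv:1406.2805 — 2 statements merged into one kernel-verified Lean document; each statement's English description precedes it below -/
import Mathlib

section
/- Let φ : ℝᵐ → ℝⁿ/∼ be continuous, where ℝⁿ/∼ is the metric space of unordered n-tuples of reals. Then there exists a continuous function f : ℝᵐ → ℝⁿ such that for every x ∈ ℝᵐ, the equivalence class of f(x) equals φ(x). -/
noncomputable def permDist (n : ℕ) (y z : Fin n → ℝ) : ℝ :=
  Finset.univ.inf' ⟨1, Finset.mem_univ 1⟩
    (fun σ : Equiv.Perm (Fin n) => ∑ k, |y k - z (σ k)|)

lemma exists_ge_map_le (n : ℕ) (σ : Equiv.Perm (Fin n)) (k : Fin n) :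
    ∃ i, k ≤ i ∧ σ i ≤ k := by
  by_contra h
  push_neg at h
  have hmaps : ∀ i ∈ Finset.Ici k, σ i ∈ Finset.Ioi k := by
    intro i hi
    simp only [Finset.mem_Ici] at hi
    simp only [Finset.mem_Ioi]
    exact h i hi
  have hcard := Finset.card_le_card_of_injOn σ hmaps (σ.injective.injOn)
  rw [Fin.card_Ici, Fin.card_Ioi] at hcard
  have := k.isLt
  omega

lemma side (n : ℕ) (u v : Fin n → ℝ) (hu : Monotone u) (hv : Monotone v)
    (σ : Equiv.Perm (Fin n)) (c : ℝ) (h : ∀ i, |u i - v (σ i)| ≤ c) (k : Fin n) :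
    u k - v k ≤ c := by
  obtain ⟨i, hki, hσi⟩ := exists_ge_map_le n σ k
  have h1 := hu hki
  have h2 := hv hσi
  have h3 := le_abs_self (u i - v (σ i))
  have h4 := h i
  linarith

lemma two_sided (n : ℕ) (u v : Fin n → ℝ) (hu : Monotone u) (hv : Monotone v)
    (σ : Equiv.Perm (Fin n)) (c : ℝ) (h : ∀ i, |u i - v (σ i)| ≤ c) (k : Fin n) :
    |u k - v k| ≤ c := by
  rw [abs_sub_le_iff]
  refine ⟨side n u v hu hv σ c h k, side n v u hv hu σ⁻¹ c ?_ k⟩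
  intro i
  have := h (σ⁻¹ i)
  rw [show σ (σ⁻¹ i) = i from σ.apply_symm_apply i] at this
  rwa [abs_sub_comm]

/-- Sorting bound: the k-th order statistics differ by at most permDist. -/
lemma sort_lipschitz (n : ℕ) (y z : Fin n → ℝ) (k : Fin n) :
    |(y ∘ Tuple.sort y) k - (z ∘ Tuple.sort z) k| ≤ permDist n y z := by
  obtain ⟨σ0, _, hσ0⟩ := Finset.exists_mem_eq_inf' (α := ℝ)
    ⟨1, Finset.mem_univ 1⟩ (fun σ : Equiv.Perm (Fin n) => ∑ k, |y k - z (σ k)|)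
  have hperm : permDist n y z = ∑ j, |y j - z (σ0 j)| := hσ0
  set τ := Tuple.sort y
  set ρ := Tuple.sort z
  have hu : Monotone (y ∘ τ) := Tuple.monotone_sort y
  have hv : Monotone (z ∘ ρ) := Tuple.monotone_sort z
  refine two_sided n (y ∘ τ) (z ∘ ρ) hu hv (τ.trans (σ0.trans ρ⁻¹)) _ ?_ k
  intro i
  have hterm : |y (τ i) - z (σ0 (τ i))| ≤ ∑ j, |y j - z (σ0 j)| :=
    Finset.single_le_sum (f := fun j => |y j - z (σ0 j)|)
      (fun j _ => abs_nonneg _) (Finset.mem_univ (τ i))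
  rw [hperm]
  simpa using hterm

theorem continuous_selection (m n : ℕ) (φ : EuclideanSpace ℝ (Fin m) → (Fin n → ℝ))
    (hφ : ∀ x : EuclideanSpace ℝ (Fin m), ∀ ε > 0, ∃ δ > 0,
      ∀ x' : EuclideanSpace ℝ (Fin m), dist x x' < δ → permDist n (φ x) (φ x') < ε) :
    ∃ f : EuclideanSpace ℝ (Fin m) → (Fin n → ℝ), Continuous f ∧
      ∀ x, ∃ σ : Equiv.Perm (Fin n), f x = φ x ∘ σ := by
  refine ⟨fun x => φ x ∘ Tuple.sort (φ x), ?_, fun x => ⟨Tuple.sort (φ x), rfl⟩⟩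
  rw [Metric.continuous_iff]
  intro x ε hε
  obtain ⟨δ, hδ, hd⟩ := hφ x ε hε
  refine ⟨δ, hδ, fun x' hx' => ?_⟩
  rw [dist_comm] at hx'
  have hpd := hd x' hx'
  rw [dist_pi_lt_iff hε]
  intro k
  have := sort_lipschitz n (φ x) (φ x') k
  rw [Real.dist_eq, abs_sub_comm]
  linarith
end

section
/- For x, y ∈ ℝⁿ with both x and y non-decreasingly sorted, min_{σ∈S_n} ‖x − σ·y‖₁ = ‖x − y‖₁; i.e., the identity permutation achieves the minimum in the quotient metric when both representatives are sorted. -/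
lemma key4 (a b c d : ℝ) (hab : a ≤ b) (hcd : c ≤ d) :
    |a - c| + |b - d| ≤ |a - d| + |b - c| := by
  rcases abs_cases (a - c) with ⟨h1, h1'⟩ | ⟨h1, h1'⟩ <;>
  rcases abs_cases (b - d) with ⟨h2, h2'⟩ | ⟨h2, h2'⟩ <;>
  rcases abs_cases (a - d) with ⟨h3, h3'⟩ | ⟨h3, h3'⟩ <;>
  rcases abs_cases (b - c) with ⟨h4, h4'⟩ | ⟨h4, h4'⟩ <;>
  linarith

lemma key_sum (n : ℕ) (x y : Fin n → ℝ) (hx : Monotone x) (hy : Monotone y) :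
    ∀ (N : ℕ) (σ : Equiv.Perm (Fin n)), σ.support.card ≤ N →
      ∑ k, |x k - y k| ≤ ∑ k, |x k - y (σ k)| := by
  intro N
  induction N with
  | zero =>
    intro σ h
    have : σ = 1 := by
      rw [← Equiv.Perm.support_eq_empty_iff]
      exact Finset.card_eq_zero.mp (Nat.le_zero.mp h)
    simp [this]
  | succ N ih =>
    intro σ h
    by_cases hσ : σ = 1
    · simp [hσ]
    · have hne : σ.support.Nonempty := by
        rw [Finset.nonempty_iff_ne_empty, Ne, Equiv.Perm.support_eq_empty_iff]
        exact hσ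
      set i := σ.support.min' hne with hi
      have hiS : i ∈ σ.support := Finset.min'_mem _ _
      set j := σ⁻¹ i with hj
      have hjS : j ∈ σ.support := by
        rw [hj, ← Equiv.Perm.support_inv]
        exact Equiv.Perm.apply_mem_support.mpr (by rwa [Equiv.Perm.support_inv])
      have hσj : σ j = i := by simp [hj]
      have hji : j ≠ i := by
        intro hcontra
        apply Equiv.Perm.mem_support.mp hiS
        rw [← hcontra, hσj]
        exact hcontra.symm
      have hij : i < j := lt_of_le_of_ne (Finset.min'_le _ _ hjS) (Ne.symm hji)
      have hσiS : σ i ∈ σ.support := Equiv.Perm.apply_mem_support.mpr hiS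
      have hiσi : i < σ i :=
        lt_of_le_of_ne (Finset.min'_le _ _ hσiS) (Ne.symm (Equiv.Perm.mem_support.mp hiS))
      set σ' := σ * Equiv.swap i j with hσ'
      have hσ'i : σ' i = i := by simp [hσ', hσj]
      have hσ'j : σ' j = σ i := by simp [hσ', Equiv.swap_apply_right]
      have hσ'k : ∀ k, k ≠ i → k ≠ j → σ' k = σ k := by
        intro k hk1 hk2
        simp [hσ', Equiv.swap_apply_of_ne_of_ne hk1 hk2]
      have hsub : σ'.support ⊆ σ.support.erase i := by
        intro k hk
        have hki : k ≠ i := by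
          intro hcontra
          apply Equiv.Perm.mem_support.mp hk
          rw [hcontra, hσ'i]
        rw [Finset.mem_erase]
        refine ⟨hki, ?_⟩
        by_cases hkj : k = j
        · rw [hkj]; exact hjS
        · rw [Equiv.Perm.mem_support, ← hσ'k k hki hkj]
          exact Equiv.Perm.mem_support.mp hk
      have hcard : σ'.support.card ≤ N := by
        have := Finset.card_le_card hsub
        have h2 : (σ.support.erase i).card < σ.support.card :=
          Finset.card_erase_lt_of_mem hiS
        omega
      have step1 := ih σ' hcard
      refine le_trans step1 ?_
      -- now compare ∑ |x k - y (σ' k)| with ∑ |x k - y (σ k)|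
      have split : ∀ (g : Fin n → ℝ),
          ∑ k, g k = g i + (g j + ∑ k ∈ (Finset.univ.erase i).erase j, g k) := by
        intro g
        rw [Finset.add_sum_erase _ g (Finset.mem_erase.mpr ⟨hji, Finset.mem_univ j⟩),
          Finset.add_sum_erase _ g (Finset.mem_univ i)]
      rw [split (fun k => |x k - y (σ' k)|), split (fun k => |x k - y (σ k)|)]
      have htail : ∑ k ∈ (Finset.univ.erase i).erase j, |x k - y (σ' k)|
          = ∑ k ∈ (Finset.univ.erase i).erase j, |x k - y (σ k)| := by
        apply Finset.sum_congr rfl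
        intro k hk
        rw [Finset.mem_erase] at hk
        obtain ⟨hkj, hk'⟩ := hk
        rw [Finset.mem_erase] at hk'
        rw [hσ'k k hk'.1 hkj]
      rw [hσ'i, hσ'j, hσj, htail]
      have hmain : |x i - y i| + |x j - y (σ i)| ≤ |x i - y (σ i)| + |x j - y i| :=
        key4 (x i) (x j) (y i) (y (σ i)) (hx hij.le) (hy hiσi.le)
      linarith

theorem permDist_of_sorted (n : ℕ) (x y : Fin n → ℝ)
    (hx : Monotone x) (hy : Monotone y) :
    permDist n x y = ∑ k, |x k - y k| := by
  apply le_antisymm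
  · have := Finset.inf'_le (fun σ : Equiv.Perm (Fin n) => ∑ k, |x k - y (σ k)|)
      (Finset.mem_univ (1 : Equiv.Perm (Fin n)))
    simpa [permDist] using this
  · apply Finset.le_inf'
    intro σ _
    exact key_sum n x y hx hy σ.support.card σ le_rfl
end
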